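/- (Lemma 2.5(3),(4)) In the generalized matrix ring setting, let φ : R → R be an additive map satisfying condition (P), and define ψ(U) = φ(U) − φ(1)·U + T·U − U·T where T = e·φ(e)·f + f·φ(f)·e and f = 1 − e. Then for every m ∈ R with m = emf one has e·ψ(m)·e = 0 and f·ψ(m)·f = 0, and for every n ∈ R with n = fne one has e·ψ(n)·e = 0 and f·ψ(n)·f = 0. -/
import Mathlib

set_option maxHeartbeats 1000000


theorem psi_offdiagonal_corners_vanish
    {R : Type*} [Ring R] (e : R) (he : e * e = e)
    (h2A : ∀ x : R, e * x * e + e * x * e = 0 → e * x * e = 0)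
    (h2B : ∀ x : R, (1 - e) * x * (1 - e) + (1 - e) * x * (1 - e) = 0 →
      (1 - e) * x * (1 - e) = 0)
    (hlf : ∀ a : R, a = e * a * e → (∀ x : R, a * (e * x * (1 - e)) = 0) → a = 0)
    (hrf : ∀ b : R, b = (1 - e) * b * (1 - e) → (∀ x : R, (e * x * (1 - e)) * b = 0) → b = 0)
    (φ : R →+ R)
    (hP : ∀ U V : R, U * V = 0 → V * U = 0 →
      φ U * V + V * φ U + U * φ V + φ V * U = 0)
    (ψ : R → R)
    (hψ : ∀ U : R, ψ U = φ U - φ 1 * U +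
      ((e * φ e * (1 - e) + (1 - e) * φ (1 - e) * e) * U -
        U * (e * φ e * (1 - e) + (1 - e) * φ (1 - e) * e))) :
    (∀ m : R, m = e * m * (1 - e) →
      e * ψ m * e = 0 ∧ (1 - e) * ψ m * (1 - e) = 0) ∧
    (∀ n : R, n = (1 - e) * n * e →
      e * ψ n * e = 0 ∧ (1 - e) * ψ n * (1 - e) = 0) := by
  have hef : e * (1 - e) = 0 := by linear_combination (norm := noncomm_ring) -he
  have hfe : (1 - e) * e = 0 := by linear_combination (norm := noncomm_ring) -he
  have key := hP e (1 - e) hef hfe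
  simp only [map_add, map_sub] at key
  constructor
  · intro m hm
    have hem : e * m = m := by
      linear_combination (norm := noncomm_ring) e*hm + he*m*(1-e) - hm
    have hme : m * e = 0 := by
      linear_combination (norm := noncomm_ring) hm * e - e * m * he
    have hmm : m * m = 0 := by
      linear_combination (norm := noncomm_ring) m*hm + hme*m*(1-e)
    have p1 : (e + m) * ((1 - e) - m) = 0 := by
      linear_combination (norm := noncomm_ring) -he - hem - hme - hmm
    have p2 : ((1 - e) - m) * (e + m) = 0 := by
      linear_combination (norm := noncomm_ring) -he - hem - hme - hmm
    have p3 : (e - m) * ((1 - e) + m) = 0 := by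
      linear_combination (norm := noncomm_ring) -he + hem + hme - hmm
    have p4 : ((1 - e) + m) * (e - m) = 0 := by
      linear_combination (norm := noncomm_ring) -he + hem + hme - hmm
    have h1 := hP (e + m) ((1 - e) - m) p1 p2
    have h2 := hP (e - m) ((1 - e) + m) p3 p4
    simp only [map_add, map_sub] at h1 h2
    have hSMee0 : e * ((φ m) + (m) * (φ e) + (m) * (φ m)) * e = 0 := h2A _ (by
      linear_combination (norm := noncomm_ring) -e * h1 * e + m * h1 * e + e * key * e - (2:R) * (e) * (φ e) * hme - (2:R) * (e) * (φ m) * he - (2:R) * (e) * (φ m) * hme - (2:R) * he * (φ m) * (e) + hem * (φ 1) * (e) + (e) * (φ 1) * hme + (2:R) * (m) * (φ e) * he + (2:R) * (m) * (φ e) * hme + (2:R) * (m) * (φ m) * he + (2:R) * (m) * (φ m) * hme + (2:R) * hme * (φ e) * (e) + (2:R) * hme * (φ m) * (e) + (2:R) * hmm * (φ e) * (e) + (2:R) * hmm * (φ m) * (e) - hme * (φ 1) * (e) - hmm * (φ 1) * (e) - (m) * (φ 1) * he - (m) * (φ 1) * hme)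
    have hSMee1 : e * ((φ m) + (m) * (φ e) - (m) * (φ m)) * e = 0 := h2A _ (by
      linear_combination (norm := noncomm_ring) m * h1 * e + e * h2 * e - e * key * e + (2:R) * (m) * (φ e) * he + (2:R) * (m) * (φ e) * hme + (2:R) * (m) * (φ m) * he + (2:R) * (m) * (φ m) * hme + (2:R) * hme * (φ e) * (e) + (2:R) * hme * (φ m) * (e) + (2:R) * hmm * (φ e) * (e) + (2:R) * hmm * (φ m) * (e) - hme * (φ 1) * (e) - hmm * (φ 1) * (e) - (m) * (φ 1) * he - (m) * (φ 1) * hme - (2:R) * (e) * (φ e) * hme - (2:R) * (e) * (φ m) * he + (2:R) * (e) * (φ m) * hme - (2:R) * he * (φ m) * (e) + hem * (φ 1) * (e) + (e) * (φ 1) * hme)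
    have hSMff0 : (1 - e) * (-(φ e) * (m) + (φ m) - (φ m) * (m) + (φ 1) * (m)) * (1 - e) = 0 := h2B _ (by
      linear_combination (norm := noncomm_ring) (1 - e) * h1 * m + (1 - e) * h1 * (1 - e) - (1 - e) * key * (1 - e) - (φ 1) * hme + (e) * (φ 1) * hme + (2:R) * (φ e) * hem + (2:R) * (φ e) * hmm + (2:R) * (φ m) * hem + (2:R) * (φ m) * hmm - (φ 1) * hem - (φ 1) * hmm - (2:R) * (e) * (φ e) * hem - (2:R) * (e) * (φ e) * hmm - (2:R) * (e) * (φ m) * hem - (2:R) * (e) * (φ m) * hmm - (2:R) * he * (φ e) * (m) - (2:R) * he * (φ m) * (m) - (2:R) * hem * (φ e) * (m) - (2:R) * hem * (φ m) * (m) + he * (φ 1) * (m) + hem * (φ 1) * (m) + (e) * (φ 1) * hem + (e) * (φ 1) * hmm - (2:R) * (φ m) * he + (2:R) * (e) * (φ m) * he - (2:R) * he * (φ m) + (2:R) * he * (φ m) * (e) - (2:R) * hem * (φ e) + (2:R) * hem * (φ e) * (e) - (2:R) * hem * (φ m) + (2:R) * hem * (φ m) * (e) + hem * (φ 1) - hem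 * (φ 1) * (e))
    have hSMff1 : (1 - e) * (-(φ e) * (m) + (φ m) + (φ m) * (m) + (φ 1) * (m)) * (1 - e) = 0 := h2B _ (by
      linear_combination (norm := noncomm_ring) (1 - e) * h1 * m - (1 - e) * h2 * (1 - e) + (1 - e) * key * (1 - e) - (φ 1) * hme + (e) * (φ 1) * hme + (2:R) * (φ e) * hem + (2:R) * (φ e) * hmm + (2:R) * (φ m) * hem + (2:R) * (φ m) * hmm - (φ 1) * hem - (φ 1) * hmm - (2:R) * (e) * (φ e) * hem - (2:R) * (e) * (φ e) * hmm - (2:R) * (e) * (φ m) * hem - (2:R) * (e) * (φ m) * hmm - (2:R) * he * (φ e) * (m) - (2:R) * he * (φ m) * (m) - (2:R) * hem * (φ e) * (m) - (2:R) * hem * (φ m) * (m) + he * (φ 1) * (m) + hem * (φ 1) * (m) + (e) * (φ 1) * hem + (e) * (φ 1) * hmm - (2:R) * (φ m) * he + (2:R) * (e) * (φ m) * he - (2:R) * he * (φ m) + (2:R) * he * (φ m) * (e) - (2:R) * hem * (φ e) + (2:R) * hem * (φ e) * (e) + (2:R) * hem * (φ m) - (2:R) * hem * (φ m) * (e) +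 hem * (φ 1) - hem * (φ 1) * (e))
    constructor
    · refine h2A (ψ m) ?_
      rw [hψ m]
      simp only [map_sub]
      linear_combination (norm := noncomm_ring) hSMee0 + hSMee1 - (2:R) * m * h1 * e - (2:R) * (e) * (φ 1) * hme + (2:R) * he * (φ e) * (m) * (e) - (2:R) * (e) * (φ e) * hem * (e) - (2:R) * he * (φ 1) * (e) * (m) * (e) - (2:R) * hem * (e) * (φ e) * (e) - (2:R) * hem * (φ 1) * (e) * (e) + (2:R) * hem * (φ e) * (e) * (e) + (2:R) * hem * (e) * (φ 1) * (e) * (e) - (6:R) * hme * (φ e) * (e) - (2:R) * (m) * (φ e) * he + (2:R) * hme * (φ 1) * (e) * (e) - (2:R) * hem * (φ e) * (e) - (4:R) * (m) * (φ e) * hme - (4:R) * (m) * (φ m) * he - (4:R) * (m) * (φ m) * hme - (4:R) * hme * (φ m) * (e) - (4:R) * hmm * (φ e) * (e) - (4:R) * hmm * (φ m) * (e) + (2:R) * hme * (φ 1) * (e) + (2:R) * hmm * (φ 1) * (e) + (2:R) * (m) * (φ 1) * hme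
    · refine h2B (ψ m) ?_
      rw [hψ m]
      simp only [map_sub]
      linear_combination (norm := noncomm_ring) hSMff0 + hSMff1 - (2:R) * (1 - e) * h1 * m + (2:R) * (φ 1) * hme + (4:R) * (φ 1) * hem - (2:R) * (φ 1) * hem * (e) - (6:R) * (φ e) * hem + (2:R) * (φ e) * hem * (e) - (4:R) * (e) * (φ 1) * hem + (2:R) * (e) * (φ 1) * hem * (e) - (2:R) * (e) * (φ 1) * hme + (2:R) * he * (φ e) * (m) + (2:R) * he * (φ e) * (m) * (e) + (6:R) * (e) * (φ e) * hem - (2:R) * (e) * (φ e) * hem * (e) + (2:R) * he * (φ 1) * (e) * (m) - (2:R) * he * (φ 1) * (e) * (m) * (e) + (2:R) * hem * (e) * (φ e) - (2:R) * hem * (e) * (φ e) * (e) + (2:R) * hem * (φ 1) * (e) - (2:R) * hem * (φ 1) * (e) * (e) - (2:R) * hem * (φ e) * (e) + (2:R) * hem * (φ e) * (e) * (e) - (2:R) * hem * (e) * (φ 1) * (e) + (2:R) * hem * (e) * (φ 1) * (e) * (e) - (4:R) * (φ e) * hmm - (4:R) * (φ m) * hem - (4:R) * (φ m) * hmm + (2:R)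 * (φ 1) * hmm + (4:R) * (e) * (φ e) * hmm + (4:R) * (e) * (φ m) * hem + (4:R) * (e) * (φ m) * hmm + (4:R) * he * (φ m) * (m) + (4:R) * hem * (φ e) * (m) + (4:R) * hem * (φ m) * (m) - (2:R) * he * (φ 1) * (m) - (2:R) * hem * (φ 1) * (m) - (2:R) * (e) * (φ 1) * hmm
  · intro n hn
    have hne : n * e = n := by
      linear_combination (norm := noncomm_ring) hn*e + (1-e)*n*he - hn
    have hen : e * n = 0 := by
      linear_combination (norm := noncomm_ring) e*hn - he*n*e
    have hnn : n * n = 0 := by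
      linear_combination (norm := noncomm_ring) n*hn - hne*n*e
    have p5 : ((1 - e) + n) * (e - n) = 0 := by
      linear_combination (norm := noncomm_ring) -he + hen + hne - hnn
    have p6 : (e - n) * ((1 - e) + n) = 0 := by
      linear_combination (norm := noncomm_ring) -he + hen + hne - hnn
    have p7 : ((1 - e) - n) * (e + n) = 0 := by
      linear_combination (norm := noncomm_ring) -he - hen - hne - hnn
    have p8 : (e + n) * ((1 - e) - n) = 0 := by
      linear_combination (norm := noncomm_ring) -he - hen - hne - hnn
    have h3 := hP ((1 - e) + n) (e - n) p5 p6
    have h4 := hP ((1 - e) - n) (e + n) p7 p8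
    simp only [map_add, map_sub] at h3 h4
    have hSNee0 : e * ((φ e) * (n) + (φ n) - (φ n) * (n) - (φ 1) * (n)) * e = 0 := h2A _ (by
      linear_combination (norm := noncomm_ring) e * h3 * e - e * h3 * n - e * key * e - (e) * (φ 1) * hne - (2:R) * (e) * (φ n) * he - (2:R) * he * (φ n) * (e) + hen * (φ 1) * (e) - (2:R) * hen * (φ e) * (e) + (2:R) * hen * (φ n) * (e) + (e) * (φ 1) * hen - (e) * (φ 1) * hnn - (2:R) * (e) * (φ e) * hen + (2:R) * (e) * (φ e) * hnn + (2:R) * (e) * (φ n) * hen - (2:R) * (e) * (φ n) * hnn + he * (φ 1) * (n) - (2:R) * he * (φ e) * (n) + (2:R) * he * (φ n) * (n) - hen * (φ 1) * (n) + (2:R) * hen * (φ e) * (n) - (2:R) * hen * (φ n) * (n))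
    have hSNee1 : e * ((φ e) * (n) + (φ n) + (φ n) * (n) - (φ 1) * (n)) * e = 0 := h2A _ (by
      linear_combination (norm := noncomm_ring) -e * h3 * n - e * h4 * e + e * key * e - (e) * (φ 1) * hne + (e) * (φ 1) * hen - (e) * (φ 1) * hnn - (2:R) * (e) * (φ e) * hen + (2:R) * (e) * (φ e) * hnn + (2:R) * (e) * (φ n) * hen - (2:R) * (e) * (φ n) * hnn + he * (φ 1) * (n) - (2:R) * he * (φ e) * (n) + (2:R) * he * (φ n) * (n) - hen * (φ 1) * (n) + (2:R) * hen * (φ e) * (n) - (2:R) * hen * (φ n) * (n) - (2:R) * (e) * (φ n) * he - (2:R) * he * (φ n) * (e) + hen * (φ 1) * (e) - (2:R) * hen * (φ e) * (e) - (2:R) * hen * (φ n) * (e))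
    have hSNff0 : (1 - e) * ((φ n) - (n) * (φ e) + (n) * (φ n) + (n) * (φ 1)) * (1 - e) = 0 := h2B _ (by
      linear_combination (norm := noncomm_ring) n * h3 * (1 - e) - (1 - e) * h3 * (1 - e) + (1 - e) * key * (1 - e) - hen * (φ 1) + hen * (φ 1) * (e) + (n) * (φ 1) * he - (n) * (φ 1) * hne - (2:R) * (n) * (φ e) * he + (2:R) * (n) * (φ e) * hne + (2:R) * (n) * (φ n) * he - (2:R) * (n) * (φ n) * hne - hne * (φ 1) + hne * (φ 1) * (e) + (2:R) * hne * (φ e) - (2:R) * hne * (φ e) * (e) - (2:R) * hne * (φ n) + (2:R) * hne * (φ n) * (e) + hnn * (φ 1) - hnn * (φ 1) * (e) - (2:R) * hnn * (φ e) + (2:R) * hnn * (φ e) * (e) + (2:R) * hnn * (φ n) - (2:R) * hnn * (φ n) * (e) + (φ 1) * hne - (2:R) * (φ e) * hne - (2:R) * (φ n) * he + (2:R) * (φ n) * hne - (e) * (φ 1) * hne + (2:R) * (e) * (φ e) * hne + (2:R) * (e) * (φ n) * he - (2:R) * (e) * (φ n) * hne - (2:R) * he * (φ n) + (2:R) * he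 * (φ n) * (e))
    have hSNff1 : (1 - e) * ((φ n) - (n) * (φ e) - (n) * (φ n) + (n) * (φ 1)) * (1 - e) = 0 := h2B _ (by
      linear_combination (norm := noncomm_ring) n * h3 * (1 - e) + (1 - e) * h4 * (1 - e) - (1 - e) * key * (1 - e) - hen * (φ 1) + hen * (φ 1) * (e) + (n) * (φ 1) * he - (n) * (φ 1) * hne - (2:R) * (n) * (φ e) * he + (2:R) * (n) * (φ e) * hne + (2:R) * (n) * (φ n) * he - (2:R) * (n) * (φ n) * hne - hne * (φ 1) + hne * (φ 1) * (e) + (2:R) * hne * (φ e) - (2:R) * hne * (φ e) * (e) - (2:R) * hne * (φ n) + (2:R) * hne * (φ n) * (e) + hnn * (φ 1) - hnn * (φ 1) * (e) - (2:R) * hnn * (φ e) + (2:R) * hnn * (φ e) * (e) + (2:R) * hnn * (φ n) - (2:R) * hnn * (φ n) * (e) + (φ 1) * hne - (2:R) * (φ e) * hne - (2:R) * (φ n) * he - (2:R) * (φ n) * hne - (e) * (φ 1) * hne + (2:R) * (e) * (φ e) * hne + (2:R) * (e) * (φ n) * he + (2:R) * (e) * (φ n) * hne - (2:R) * he * (φ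 n) + (2:R) * he * (φ n) * (e))
    constructor
    · refine h2A (ψ n) ?_
      rw [hψ n]
      simp only [map_sub]
      linear_combination (norm := noncomm_ring) hSNee0 + hSNee1 + (2:R) * he * (φ e) * (n) * (e) - (2:R) * (e) * (φ e) * hen * (e) - (2:R) * he * (φ 1) * (e) * (n) * (e) - (2:R) * hen * (e) * (φ e) * (e) - (2:R) * hen * (φ 1) * (e) * (e) + (2:R) * hen * (φ e) * (e) * (e) + (2:R) * hen * (e) * (φ 1) * (e) * (e)
    · refine h2B (ψ n) ?_
      rw [hψ n]
      simp only [map_sub]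
      linear_combination (norm := noncomm_ring) hSNff0 + hSNff1 - (2:R) * n * h3 * (1 - e) + (2:R) * (φ 1) * hne + (2:R) * (φ 1) * hen - (2:R) * (φ 1) * hen * (e) - (2:R) * (φ e) * hen + (2:R) * (φ e) * hen * (e) - (2:R) * (e) * (φ 1) * hen + (2:R) * (e) * (φ 1) * hen * (e) - (6:R) * hne * (φ e) + (6:R) * hne * (φ e) * (e) - (2:R) * (n) * (φ 1) * he + (2:R) * (n) * (φ e) * he - (2:R) * hne * (φ 1) * (e) * (e) - (2:R) * (e) * (φ 1) * hne - (2:R) * he * (φ e) * (n) + (2:R) * he * (φ e) * (n) * (e) + (2:R) * (e) * (φ e) * hen - (2:R) * (e) * (φ e) * hen * (e) + (2:R) * he * (φ 1) * (e) * (n) - (2:R) * he * (φ 1) * (e) * (n) * (e) + (2:R) * hen * (e) * (φ e) - (2:R) * hen * (e) * (φ e) * (e) - (2:R) * hen * (φ 1) * (e) * (e) + (2:R) * hen * (φ e) * (e) * (e) - (2:R) * hen * (e) * (φ 1) * (e) + (2:R) * hen * (e) * (φ 1) * (e) * (e) + (2:R) * hen * (φ 1) - (2:R) * hen * (φ e)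 + (2:R) * (n) * (φ 1) * hne - (4:R) * (n) * (φ e) * hne - (4:R) * (n) * (φ n) * he + (4:R) * (n) * (φ n) * hne + (2:R) * hne * (φ 1) + (4:R) * hne * (φ n) - (4:R) * hne * (φ n) * (e) - (2:R) * hnn * (φ 1) + (2:R) * hnn * (φ 1) * (e) + (4:R) * hnn * (φ e) - (4:R) * hnn * (φ e) * (e) - (4:R) * hnn * (φ n) + (4:R) * hnn * (φ n) * (e)
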